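/- Define a_{k,l}(r,n) := Σ_{0 ≤ j ≤ l/2} (-1)^j C(l+k-2-j, l-2j) C(j+k-2, k-2) n^j r^(l-2j) for k ≥ 2, l ≥ 0. Then for each fixed k ≥ 2, the formal power series Σ_{l≥0} a_{k,l}(r,n) X^l equals 1/(1 - rX + nX^2)^(k-1) as formal power series in X over the polynomial ring ℚ[r,n]. -/

import Mathlib

open Finset PowerSeries

/-- The base ring `ℚ[r,n]`: polynomials in two variables `r = X 0` and `n = X 1`. -/
abbrev RN : Type := MvPolynomial (Fin 2) ℚ

/-- `a_{k,l}(r,n) = Σ_{0 ≤ j ≤ l/2} (-1)^j C(l+k-2-j, l-2j) C(j+k-2, k-2) n^j r^(l-2j)`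
as an element of `ℚ[r,n]`. -/
noncomputable def gegenA (k l : ℕ) : RN :=
  ∑ j ∈ Finset.range (l / 2 + 1),
    (-1 : RN) ^ j * (Nat.choose (l + k - 2 - j) (l - 2 * j) : RN) *
      (Nat.choose (j + k - 2) (k - 2) : RN) * (MvPolynomial.X 1) ^ j *
      (MvPolynomial.X 0) ^ (l - 2 * j)

/-- generic term -/
noncomputable def gt (c d b j e : ℕ) : RN :=
  (-1 : RN) ^ j * (c.choose d : RN) * (b : RN) * (MvPolynomial.X 1) ^ j *
    (MvPolynomial.X 0) ^ e

lemma key_nat (m l j : ℕ) (h : 2 * j ≤ l + 1) :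
    (l + m + 3 - j).choose (l + 2 - 2 * j) * (j + m + 1).choose (m + 1)
      = (l + m + 2 - j).choose (l + 1 - 2 * j) * (j + m + 1).choose (m + 1)
        + ((l + m + 2 - j).choose (l + 2 - 2 * j) * (j + m).choose (m + 1)
          + (l + m + 2 - j).choose (l + 2 - 2 * j) * (j + m).choose m) := by
  obtain ⟨a, ha⟩ : ∃ a, l + 1 = 2 * j + a := ⟨l + 1 - 2 * j, by omega⟩
  have e1 : l + m + 3 - j = (j + a + m + 1) + 1 := by omega
  have e2 : l + 2 - 2 * j = a + 1 := by omega
  have e3 : l + m + 2 - j = j + a + m + 1 := by omega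
  have e4 : l + 1 - 2 * j = a := by omega
  rw [e1, e2, e3, e4, Nat.choose_succ_succ,
    show j + m + 1 = (j + m) + 1 from rfl, Nat.choose_succ_succ (j + m) m]
  ring

lemma key_nat2 (l j : ℕ) (h : 2 * j ≤ l + 1) :
    (l + 2 - j).choose (l + 2 - 2 * j)
      = (l + 1 - j).choose (l + 1 - 2 * j) + (l + 1 - j).choose (l + 2 - 2 * j) := by
  obtain ⟨a, ha⟩ : ∃ a, l + 1 = 2 * j + a := ⟨l + 1 - 2 * j, by omega⟩
  have e1 : l + 2 - j = (j + a) + 1 := by omega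
  have e2 : l + 2 - 2 * j = a + 1 := by omega
  have e3 : l + 1 - j = j + a := by omega
  have e4 : l + 1 - 2 * j = a := by omega
  rw [e1, e2, e3, e4, Nat.choose_succ_succ]

lemma gegenA_gt (k l : ℕ) :
    gegenA k l = ∑ j ∈ Finset.range (l / 2 + 1),
      gt (l + k - 2 - j) (l - 2 * j) ((j + k - 2).choose (k - 2)) j (l - 2 * j) := rfl

-- T-form of gegenA (m+3) (l+2)
lemma hT (m l : ℕ) :
    gegenA (m + 3) (l + 2) = ∑ j ∈ Finset.range (l / 2 + 2),
      gt (l + m + 3 - j) (l + 2 - 2 * j) ((j + m + 1).choose (m + 1)) j (l + 2 - 2 * j) := by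
  rw [gegenA_gt, show (l + 2) / 2 + 1 = l / 2 + 2 from by omega]
  refine Finset.sum_congr rfl fun j hj => ?_
  congr 2 <;> omega

lemma hU (m l : ℕ) :
    gegenA (m + 2) (l + 2) = ∑ j ∈ Finset.range (l / 2 + 2),
      gt (l + m + 2 - j) (l + 2 - 2 * j) ((j + m).choose m) j (l + 2 - 2 * j) := by
  rw [gegenA_gt, show (l + 2) / 2 + 1 = l / 2 + 2 from by omega]
  refine Finset.sum_congr rfl fun j hj => ?_
  congr 2 <;> omega

lemma hM (m l : ℕ) :
    MvPolynomial.X 0 * gegenA (m + 3) (l + 1) = ∑ j ∈ Finset.range ((l + 1) / 2 + 1),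
      gt (l + m + 2 - j) (l + 1 - 2 * j) ((j + m + 1).choose (m + 1)) j (l + 2 - 2 * j) := by
  rw [gegenA_gt, Finset.mul_sum]
  refine Finset.sum_congr rfl fun j hj => ?_
  simp only [Finset.mem_range] at hj
  have h2j : 2 * j ≤ l + 1 := by omega
  unfold gt
  rw [show l + 1 + (m + 3) - 2 - j = l + m + 2 - j from by omega,
    show j + (m + 3) - 2 = j + m + 1 from by omega,
    show (m + 3) - 2 = m + 1 from by omega,
    show l + 1 - 2 * j = l + 1 - 2 * j from rfl,
    show l + 2 - 2 * j = (l + 1 - 2 * j) + 1 from by omega, pow_succ]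
  ring

lemma hB (m l : ℕ) :
    MvPolynomial.X 1 * gegenA (m + 3) l = - ∑ j ∈ Finset.range (l / 2 + 2),
      gt (l + m + 2 - j) (l + 2 - 2 * j) ((j + m).choose (m + 1)) j (l + 2 - 2 * j) := by
  rw [Finset.sum_range_succ']
  have h0 : gt (l + m + 2 - 0) (l + 2 - 2 * 0) ((0 + m).choose (m + 1)) 0 (l + 2 - 2 * 0)
      = 0 := by
    unfold gt
    rw [show 0 + m = m from by omega, Nat.choose_eq_zero_of_lt (by omega : m < m + 1)]
    push_cast
    ring
  rw [h0, add_zero, gegenA_gt, Finset.mul_sum, ← Finset.sum_neg_distrib]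
  refine Finset.sum_congr rfl fun j hj => ?_
  simp only [Finset.mem_range] at hj
  unfold gt
  rw [show l + (m + 3) - 2 - j = l + m + 1 - j from by omega,
    show j + (m + 3) - 2 = j + m + 1 from by omega,
    show (m + 3) - 2 = m + 1 from by omega,
    show l + m + 2 - (j + 1) = l + m + 1 - j from by omega,
    show l + 2 - 2 * (j + 1) = l - 2 * j from by omega,
    show j + 1 + m = j + m + 1 from by omega, pow_succ]
  ring

lemma perterm (m l j : ℕ) (h : 2 * j ≤ l + 1) :
    gt (l + m + 3 - j) (l + 2 - 2 * j) ((j + m + 1).choose (m + 1)) j (l + 2 - 2 * j)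
      = gt (l + m + 2 - j) (l + 1 - 2 * j) ((j + m + 1).choose (m + 1)) j (l + 2 - 2 * j)
        + (gt (l + m + 2 - j) (l + 2 - 2 * j) ((j + m).choose (m + 1)) j (l + 2 - 2 * j)
          + gt (l + m + 2 - j) (l + 2 - 2 * j) ((j + m).choose m) j (l + 2 - 2 * j)) := by
  unfold gt
  have h1 := congrArg (Nat.cast : ℕ → RN) (key_nat m l j h)
  push_cast at h1
  linear_combination ((-1 : RN)) ^ j * (MvPolynomial.X 1 : RN) ^ j *
    (MvPolynomial.X 0 : RN) ^ (l + 2 - 2 * j) * h1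

lemma edgeterm (m p : ℕ) :
    gt (2 * p + m + 3 - (p + 1)) (2 * p + 2 - 2 * (p + 1)) ((p + 1 + m + 1).choose (m + 1))
        (p + 1) (2 * p + 2 - 2 * (p + 1))
      = gt (2 * p + m + 2 - (p + 1)) (2 * p + 2 - 2 * (p + 1)) ((p + 1 + m).choose (m + 1))
          (p + 1) (2 * p + 2 - 2 * (p + 1))
        + gt (2 * p + m + 2 - (p + 1)) (2 * p + 2 - 2 * (p + 1)) ((p + 1 + m).choose m)
            (p + 1) (2 * p + 2 - 2 * (p + 1)) := by
  unfold gt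
  rw [show 2 * p + m + 3 - (p + 1) = p + m + 2 from by omega,
    show 2 * p + m + 2 - (p + 1) = p + m + 1 from by omega,
    show 2 * p + 2 - 2 * (p + 1) = 0 from by omega,
    show p + 1 + m + 1 = (p + m + 1) + 1 from by omega,
    show p + 1 + m = p + m + 1 from by omega]
  have h1 := congrArg (Nat.cast : ℕ → RN)
    (Nat.choose_succ_succ (p + m + 1) m)
  push_cast at h1
  simp only [Nat.choose_zero_right]
  linear_combination ((-1 : RN)) ^ (p + 1) * (MvPolynomial.X 1 : RN) ^ (p + 1) * h1


lemma step (m l : ℕ) :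
    gegenA (m + 3) (l + 2) + MvPolynomial.X 1 * gegenA (m + 3) l
      = MvPolynomial.X 0 * gegenA (m + 3) (l + 1) + gegenA (m + 2) (l + 2) := by
  rw [hT, hU, hM, hB]
  have key : ∑ j ∈ Finset.range (l / 2 + 2),
        gt (l + m + 3 - j) (l + 2 - 2 * j) ((j + m + 1).choose (m + 1)) j (l + 2 - 2 * j)
      = (∑ j ∈ Finset.range ((l + 1) / 2 + 1),
          gt (l + m + 2 - j) (l + 1 - 2 * j) ((j + m + 1).choose (m + 1)) j (l + 2 - 2 * j))
        + ∑ j ∈ Finset.range (l / 2 + 2),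
            (gt (l + m + 2 - j) (l + 2 - 2 * j) ((j + m).choose (m + 1)) j (l + 2 - 2 * j)
              + gt (l + m + 2 - j) (l + 2 - 2 * j) ((j + m).choose m) j (l + 2 - 2 * j)) := by
    rcases Nat.even_or_odd l with h | h
    · obtain ⟨q, hq⟩ := h
      obtain ⟨p, rfl⟩ : ∃ p, l = 2 * p := ⟨q, by omega⟩
      rw [show 2 * p / 2 + 2 = (p + 1) + 1 from by omega,
        show (2 * p + 1) / 2 + 1 = p + 1 from by omega,
        Finset.sum_range_succ, Finset.sum_range_succ (n := p + 1)
          (f := fun j => gt (2 * p + m + 2 - j) (2 * p + 2 - 2 * j) ((j + m).choose (m + 1)) j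
              (2 * p + 2 - 2 * j)
            + gt (2 * p + m + 2 - j) (2 * p + 2 - 2 * j) ((j + m).choose m) j
              (2 * p + 2 - 2 * j))]
      have hmain : ∀ j ∈ Finset.range (p + 1),
          gt (2 * p + m + 3 - j) (2 * p + 2 - 2 * j) ((j + m + 1).choose (m + 1)) j
              (2 * p + 2 - 2 * j)
            = gt (2 * p + m + 2 - j) (2 * p + 1 - 2 * j) ((j + m + 1).choose (m + 1)) j
                (2 * p + 2 - 2 * j)
              + (gt (2 * p + m + 2 - j) (2 * p + 2 - 2 * j) ((j + m).choose (m + 1)) j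
                  (2 * p + 2 - 2 * j)
                + gt (2 * p + m + 2 - j) (2 * p + 2 - 2 * j) ((j + m).choose m) j
                  (2 * p + 2 - 2 * j)) := fun j hj =>
        perterm m (2 * p) j (by have := Finset.mem_range.mp hj; omega)
      rw [Finset.sum_congr rfl hmain, Finset.sum_add_distrib, Finset.sum_add_distrib,
        edgeterm m p]
      ring
    · obtain ⟨p, rfl⟩ := h
      rw [show (2 * p + 1) / 2 + 2 = p + 2 from by omega,
        show (2 * p + 1 + 1) / 2 + 1 = p + 2 from by omega,
        ← Finset.sum_add_distrib]
      refine Finset.sum_congr rfl fun j hj => ?_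
      have hj' := Finset.mem_range.mp hj
      exact perterm m (2 * p + 1) j (by omega)
  rw [key, Finset.sum_add_distrib]
  ring

lemma hT2 (l : ℕ) :
    gegenA 2 (l + 2) = ∑ j ∈ Finset.range (l / 2 + 2),
      gt (l + 2 - j) (l + 2 - 2 * j) 1 j (l + 2 - 2 * j) := by
  rw [gegenA_gt, show (l + 2) / 2 + 1 = l / 2 + 2 from by omega]
  refine Finset.sum_congr rfl fun j hj => ?_
  rw [show l + 2 + 2 - 2 - j = l + 2 - j from by omega,
    show j + 2 - 2 = j from by omega, show 2 - 2 = 0 from rfl, Nat.choose_zero_right]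

lemma hM2 (l : ℕ) :
    MvPolynomial.X 0 * gegenA 2 (l + 1) = ∑ j ∈ Finset.range ((l + 1) / 2 + 1),
      gt (l + 1 - j) (l + 1 - 2 * j) 1 j (l + 2 - 2 * j) := by
  rw [gegenA_gt, Finset.mul_sum]
  refine Finset.sum_congr rfl fun j hj => ?_
  have hj' := Finset.mem_range.mp hj
  unfold gt
  rw [show l + 1 + 2 - 2 - j = l + 1 - j from by omega,
    show j + 2 - 2 = j from by omega, show 2 - 2 = 0 from rfl, Nat.choose_zero_right,
    show l + 2 - 2 * j = (l + 1 - 2 * j) + 1 from by omega, pow_succ]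
  ring

lemma hB2 (l : ℕ) :
    MvPolynomial.X 1 * gegenA 2 l = - ∑ j ∈ Finset.range (l / 2 + 2),
      gt (l + 1 - j) (l + 2 - 2 * j) 1 j (l + 2 - 2 * j) := by
  rw [Finset.sum_range_succ']
  have h0 : gt (l + 1 - 0) (l + 2 - 2 * 0) 1 0 (l + 2 - 2 * 0) = 0 := by
    unfold gt
    rw [show l + 1 - 0 = l + 1 from by omega, show l + 2 - 2 * 0 = l + 2 from by omega,
      Nat.choose_eq_zero_of_lt (by omega : l + 1 < l + 2)]
    push_cast
    ring
  rw [h0, add_zero, gegenA_gt, Finset.mul_sum, ← Finset.sum_neg_distrib]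
  refine Finset.sum_congr rfl fun j hj => ?_
  unfold gt
  rw [show l + 2 - 2 - j = l - j from by omega,
    show j + 2 - 2 = j from by omega, show 2 - 2 = 0 from rfl, Nat.choose_zero_right,
    show l + 1 - (j + 1) = l - j from by omega,
    show l + 2 - 2 * (j + 1) = l - 2 * j from by omega, pow_succ]
  push_cast
  ring

lemma perterm2 (l j : ℕ) (h : 2 * j ≤ l + 1) :
    gt (l + 2 - j) (l + 2 - 2 * j) 1 j (l + 2 - 2 * j)
      = gt (l + 1 - j) (l + 1 - 2 * j) 1 j (l + 2 - 2 * j)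
        + gt (l + 1 - j) (l + 2 - 2 * j) 1 j (l + 2 - 2 * j) := by
  unfold gt
  have h1 := congrArg (Nat.cast : ℕ → RN) (key_nat2 l j h)
  push_cast at h1
  linear_combination ((-1 : RN)) ^ j * (MvPolynomial.X 1 : RN) ^ j *
    (MvPolynomial.X 0 : RN) ^ (l + 2 - 2 * j) * h1

lemma edgeterm2 (p : ℕ) :
    gt (2 * p + 2 - (p + 1)) (2 * p + 2 - 2 * (p + 1)) 1 (p + 1) (2 * p + 2 - 2 * (p + 1))
      = gt (2 * p + 1 - (p + 1)) (2 * p + 2 - 2 * (p + 1)) 1 (p + 1)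
          (2 * p + 2 - 2 * (p + 1)) := by
  unfold gt
  rw [show 2 * p + 2 - (p + 1) = p + 1 from by omega,
    show 2 * p + 1 - (p + 1) = p from by omega,
    show 2 * p + 2 - 2 * (p + 1) = 0 from by omega,
    Nat.choose_zero_right, Nat.choose_zero_right]

lemma base (l : ℕ) :
    gegenA 2 (l + 2) + MvPolynomial.X 1 * gegenA 2 l
      = MvPolynomial.X 0 * gegenA 2 (l + 1) := by
  rw [hT2, hM2, hB2]
  have key : ∑ j ∈ Finset.range (l / 2 + 2),
        gt (l + 2 - j) (l + 2 - 2 * j) 1 j (l + 2 - 2 * j)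
      = (∑ j ∈ Finset.range ((l + 1) / 2 + 1),
          gt (l + 1 - j) (l + 1 - 2 * j) 1 j (l + 2 - 2 * j))
        + ∑ j ∈ Finset.range (l / 2 + 2),
            gt (l + 1 - j) (l + 2 - 2 * j) 1 j (l + 2 - 2 * j) := by
    rcases Nat.even_or_odd l with h | h
    · obtain ⟨q, hq⟩ := h
      obtain ⟨p, rfl⟩ : ∃ p, l = 2 * p := ⟨q, by omega⟩
      rw [show 2 * p / 2 + 2 = (p + 1) + 1 from by omega,
        show (2 * p + 1) / 2 + 1 = p + 1 from by omega,
        Finset.sum_range_succ, Finset.sum_range_succ (n := p + 1)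
          (f := fun j => gt (2 * p + 1 - j) (2 * p + 2 - 2 * j) 1 j (2 * p + 2 - 2 * j))]
      have hmain : ∀ j ∈ Finset.range (p + 1),
          gt (2 * p + 2 - j) (2 * p + 2 - 2 * j) 1 j (2 * p + 2 - 2 * j)
            = gt (2 * p + 1 - j) (2 * p + 1 - 2 * j) 1 j (2 * p + 2 - 2 * j)
              + gt (2 * p + 1 - j) (2 * p + 2 - 2 * j) 1 j (2 * p + 2 - 2 * j) :=
        fun j hj => perterm2 (2 * p) j (by have := Finset.mem_range.mp hj; omega)
      rw [Finset.sum_congr rfl hmain, Finset.sum_add_distrib, edgeterm2 p]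
      ring
    · obtain ⟨p, rfl⟩ := h
      rw [show (2 * p + 1) / 2 + 2 = p + 2 from by omega,
        show (2 * p + 1 + 1) / 2 + 1 = p + 2 from by omega,
        ← Finset.sum_add_distrib]
      refine Finset.sum_congr rfl fun j hj => ?_
      have hj' := Finset.mem_range.mp hj
      exact perterm2 (2 * p + 1) j (by omega)
  rw [key]
  ring

lemma gegenA_zero (k : ℕ) : gegenA k 0 = 1 := by
  unfold gegenA
  simp

lemma gegenA_one (k : ℕ) : gegenA k 1 = (((k - 1).choose 1 : ℕ) : RN) * MvPolynomial.X 0 := by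
  unfold gegenA
  rw [show 1 / 2 + 1 = 1 from rfl, Finset.sum_range_one]
  rw [show 1 + k - 2 - 0 = k - 1 from by omega, show 0 + k - 2 = k - 2 from by omega,
    Nat.choose_self, show 1 - 2 * 0 = 1 from rfl]
  push_cast
  ring

noncomputable def D : PowerSeries RN :=
  1 - PowerSeries.C (R := RN) (MvPolynomial.X 0) * PowerSeries.X
    + PowerSeries.C (R := RN) (MvPolynomial.X 1) * PowerSeries.X ^ 2

lemma coeff_mul_D (f : ℕ → RN) (L : ℕ) :
    PowerSeries.coeff (R := RN) L ((PowerSeries.mk f) * D)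
      = f L - MvPolynomial.X 0 * (if 1 ≤ L then f (L - 1) else 0)
        + MvPolynomial.X 1 * (if 2 ≤ L then f (L - 2) else 0) := by
  have hD : (PowerSeries.mk f) * D
      = PowerSeries.mk f
        - PowerSeries.C (R := RN) (MvPolynomial.X 0) * (PowerSeries.mk f * PowerSeries.X ^ 1)
        + PowerSeries.C (R := RN) (MvPolynomial.X 1) * (PowerSeries.mk f * PowerSeries.X ^ 2) := by
    unfold D; ring
  rw [hD, map_add, map_sub, PowerSeries.coeff_C_mul, PowerSeries.coeff_C_mul,
    PowerSeries.coeff_mul_X_pow', PowerSeries.coeff_mul_X_pow']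
  simp only [PowerSeries.coeff_mk]

lemma ps_base : (PowerSeries.mk fun l => gegenA 2 l) * D = 1 := by
  refine PowerSeries.ext fun L => ?_
  rw [coeff_mul_D]
  match L with
  | 0 => simp [gegenA_zero]
  | 1 =>
    rw [if_pos (by omega), if_neg (by omega)]
    simp [gegenA_zero, gegenA_one]
  | (L + 2) =>
    rw [if_pos (by omega), if_pos (by omega),
      show L + 2 - 1 = L + 1 from by omega, show L + 2 - 2 = L from rfl]
    have h := base L
    rw [PowerSeries.coeff_one, if_neg (by omega)]
    linear_combination h

lemma ps_step (k : ℕ) (hk : 2 ≤ k) :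
    (PowerSeries.mk fun l => gegenA (k + 1) l) * D = PowerSeries.mk fun l => gegenA k l := by
  refine PowerSeries.ext fun L => ?_
  rw [coeff_mul_D, PowerSeries.coeff_mk]
  match L with
  | 0 => simp [gegenA_zero]
  | 1 =>
    rw [if_pos (by omega), if_neg (by omega)]
    rw [gegenA_zero, gegenA_one, gegenA_one, Nat.choose_one_right, Nat.choose_one_right,
      show k + 1 - 1 = k from rfl, Nat.cast_sub (by omega : 1 ≤ k)]
    push_cast
    ring
  | (L + 2) =>
    rw [if_pos (by omega), if_pos (by omega),
      show L + 2 - 1 = L + 1 from by omega, show L + 2 - 2 = L from rfl]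
    obtain ⟨m, rfl⟩ : ∃ m, k = m + 2 := ⟨k - 2, by omega⟩
    have h := step m L
    linear_combination h

/-- For each fixed `k ≥ 2`, the formal power series `Σ_{l ≥ 0} a_{k,l}(r,n) X^l` equals
`1/(1 - rX + nX²)^(k-1)` as formal power series in `X` over `ℚ[r,n]`; equivalently, its
product with `(1 - rX + nX²)^(k-1)` is `1`. -/
theorem stmt2 (k : ℕ) (hk : 2 ≤ k) :
    (PowerSeries.mk fun l => gegenA k l) *
      (1 - PowerSeries.C (R := RN) (MvPolynomial.X 0) * PowerSeries.X
        + PowerSeries.C (R := RN) (MvPolynomial.X 1) * PowerSeries.X ^ 2) ^ (k - 1) = 1 := by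
  have hD : (1 - PowerSeries.C (R := RN) (MvPolynomial.X 0) * PowerSeries.X
        + PowerSeries.C (R := RN) (MvPolynomial.X 1) * PowerSeries.X ^ 2) = D := rfl
  rw [hD]
  induction k, hk using Nat.le_induction with
  | base => rw [pow_one]; exact ps_base
  | succ k hk ih =>
    rw [show k + 1 - 1 = (k - 1) + 1 from by omega, pow_succ]
    calc (PowerSeries.mk fun l => gegenA (k + 1) l) * (D ^ (k - 1) * D)
        = ((PowerSeries.mk fun l => gegenA (k + 1) l) * D) * D ^ (k - 1) := by ring
      _ = (PowerSeries.mk fun l => gegenA k l) * D ^ (k - 1) := by rw [ps_step k hk]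
      _ = 1 := ih
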